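/- arXiv:2208.04603 — 2 statements merged into one kernel-verified Lean document; each statement's English description precedes it below -/
import Mathlib

section
/- For ρ > 1 with r = 2ρ/(1+ρ²), the Möbius transformation ψ(ζ) = ρ(ρζ + i)/(ζ + iρ) maps the circle {|ζ + i r/2| = r/2} into the unit circle {|w| = 1}. -/
theorem stmt_2 (ρ : ℝ) (hρ : 1 < ρ) (r : ℝ) (hr : r = 2 * ρ / (1 + ρ ^ 2))
    (ζ : ℂ) (hζ : ‖ζ + Complex.I * (r / 2)‖ = r / 2) :
    ‖(ρ : ℂ) * ((ρ : ℂ) * ζ + Complex.I) / (ζ + Complex.I * ρ)‖ = 1 := by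
  set x := ζ.re with hx
  set y := ζ.im with hy
  have hr0 : 0 < r := by rw [hr]; positivity
  have hrρ : r * (1 + ρ ^ 2) = 2 * ρ := by
    rw [hr]; field_simp
  have key : x ^ 2 + y ^ 2 + r * y = 0 := by
    have h2 : Complex.normSq (ζ + Complex.I * (r / 2)) = (r / 2) ^ 2 := by
      rw [← Complex.sq_norm, hζ]
    simp [Complex.normSq_apply, Complex.add_re, Complex.add_im, Complex.mul_re,
      Complex.mul_im] at h2
    nlinarith [h2]
  have hnum : Complex.normSq ((ρ : ℂ) * ((ρ : ℂ) * ζ + Complex.I))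
      = ρ ^ 2 * (ρ ^ 2 * (x ^ 2 + y ^ 2) + 2 * ρ * y + 1) := by
    simp [Complex.normSq_apply, Complex.add_re, Complex.add_im, Complex.mul_re,
      Complex.mul_im]
    ring
  have hden : Complex.normSq (ζ + Complex.I * ρ)
      = x ^ 2 + y ^ 2 + 2 * ρ * y + ρ ^ 2 := by
    simp [Complex.normSq_apply, Complex.add_re, Complex.add_im, Complex.mul_re,
      Complex.mul_im]
    ring
  have heq : Complex.normSq ((ρ : ℂ) * ((ρ : ℂ) * ζ + Complex.I))
      = Complex.normSq (ζ + Complex.I * ρ) := by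
    rw [hnum, hden]
    linear_combination (ρ ^ 4 - 1) * key + (1 - ρ ^ 2) * y * hrρ
  have hdnz : Complex.normSq (ζ + Complex.I * ρ) ≠ 0 := by
    rw [hden]
    intro h
    have hρ0 : (0:ℝ) < ρ := lt_trans one_pos hρ
    have hx0 : x = 0 := by nlinarith [sq_nonneg x, sq_nonneg (y + ρ)]
    have hy0 : y = -ρ := by nlinarith [sq_nonneg x, sq_nonneg (y + ρ)]
    rw [hx0, hy0] at key
    have h2 : ρ = r := by
      have h1 : ρ * ρ = r * ρ := by nlinarith [key]
      exact mul_right_cancel₀ (ne_of_gt hρ0) h1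
    rw [← h2] at hrρ
    nlinarith [hrρ, hρ0]
  have hz : ζ + Complex.I * ρ ≠ 0 := fun h => hdnz (by rw [h]; simp)
  rw [norm_div]
  rw [Complex.norm_def, Complex.norm_def, heq]
  exact div_self (by rw [← Complex.norm_def]; exact (norm_ne_zero_iff.mpr hz))
end

section
/- Let g : ℂ̂ \ {ζ₀} → ℂ̂ be injective and holomorphic (meromorphic) with ζ₀ on the unit circle, satisfying g(0) = 0, g'(0) > 0, and the symmetry g(1/z̄) = 1/‾g(z) for all z ≠ 0, ζ₀, with g mapping the unit disk into itself. Then g(z) = z for all z. -/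
open Set Metric Filter Complex Topology

theorem stmt_12 (ζ₀ : ℂ) (hζ₀ : ‖ζ₀‖ = 1) (g : ℂ → ℂ)
    (hdiff : DifferentiableOn ℂ g {ζ₀}ᶜ)
    (hinj : Set.InjOn g {ζ₀}ᶜ)
    (h0 : g 0 = 0)
    (hderiv : 0 < (deriv g 0).re ∧ (deriv g 0).im = 0)
    (hsym : ∀ z : ℂ, z ≠ 0 → z ≠ ζ₀ → (1 / (starRingEnd ℂ) z) ≠ ζ₀ →
      g (1 / (starRingEnd ℂ) z) = 1 / (starRingEnd ℂ) (g z))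
    (hdisk : ∀ z : ℂ, ‖z‖ < 1 → ‖g z‖ < 1) :
    ∀ z : ℂ, z ≠ ζ₀ → g z = z := by
  have hζne0 : ζ₀ ≠ 0 := by
    intro h; rw [h] at hζ₀; simp at hζ₀
  have h0mem : (0:ℂ) ∈ ({ζ₀}ᶜ : Set ℂ) := by simp [Ne, eq_comm]; exact hζne0
  have hmemball : ∀ z : ℂ, ‖z‖ < 1 → z ∈ ({ζ₀}ᶜ : Set ℂ) := by
    intro z hz
    simp only [mem_compl_iff, mem_singleton_iff]
    intro h; rw [h, hζ₀] at hz; exact lt_irrefl 1 hz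
  have hgne : ∀ z : ℂ, z ≠ ζ₀ → z ≠ 0 → g z ≠ 0 := by
    intro z hz hz0 hgz
    exact hz0 (hinj (by simpa using hz) h0mem (by rw [hgz, h0]))
  -- Schwarz: |g z| ≤ |z| on the unit disk
  have hball_sub : ball (0:ℂ) 1 ⊆ {ζ₀}ᶜ := fun z hz => hmemball z (by simpa using hz)
  have hmaps : MapsTo g (ball (0:ℂ) 1) (ball (0:ℂ) 1) := by
    intro z hz
    simp only [mem_ball_zero_iff] at hz ⊢
    exact hdisk z hz
  have schwarz : ∀ z : ℂ, ‖z‖ < 1 → ‖g z‖ ≤ ‖z‖ :=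
    fun z hz => Complex.norm_le_norm_of_mapsTo_ball (hdiff.mono hball_sub) (hmaps.mono_right ball_subset_closedBall) h0 hz
  -- exterior bound from the symmetry
  have hext : ∀ z : ℂ, 1 < ‖z‖ → z ≠ ζ₀ → ‖z‖ ≤ ‖g z‖ := by
    intro z hz hzζ
    have hz0 : z ≠ 0 := by
      intro h; rw [h] at hz; simp at hz; linarith
    have hcz : (starRingEnd ℂ) z ≠ 0 := by simpa using hz0
    have hwabs : ‖1 / (starRingEnd ℂ) z‖ < 1 := by
      rw [norm_div, norm_one, Complex.norm_conj]
      rw [div_lt_one (by positivity)]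
      linarith
    have hwζ : (1 / (starRingEnd ℂ) z) ≠ ζ₀ := by
      intro h; rw [h, hζ₀] at hwabs; exact lt_irrefl 1 hwabs
    have hs := hsym z hz0 hzζ hwζ
    have hgz : g z ≠ 0 := hgne z hzζ hz0
    have h1 : ‖g (1 / (starRingEnd ℂ) z)‖ = 1 / ‖g z‖ := by
      rw [hs, norm_div, norm_one, Complex.norm_conj]
    have h2 := schwarz _ hwabs
    rw [h1, norm_div, norm_one, Complex.norm_conj] at h2
    have hgpos : 0 < ‖g z‖ := by
      simpa [norm_pos_iff] using hgz
    have hzpos : (0:ℝ) < ‖z‖ := by linarith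
    rw [div_le_div_iff₀ hgpos hzpos] at h2
    linarith
  -- open mapping near 0: a small ball around 0 is contained in g '' (ball 0 (1/2))
  have hA : AnalyticAt ℂ g 0 := hdiff.analyticAt (isOpen_compl_singleton.mem_nhds h0mem)
  have hd0 : deriv g 0 ≠ 0 := by
    intro h; rw [h] at hderiv; simp at hderiv
  have hop : 𝓝 (0:ℂ) ≤ map g (𝓝 0) := by
    rcases hA.eventually_constant_or_nhds_le_map_nhds with h | h
    · exfalso
      apply hd0
      have : g =ᶠ[𝓝 (0:ℂ)] fun _ => g 0 := h
      rw [this.deriv_eq]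
      simp
    · simpa [h0] using h
  obtain ⟨r₀, hr₀pos, hr₀⟩ : ∃ r₀ > 0, ball (0:ℂ) r₀ ⊆ g '' ball (0:ℂ) (1/2) := by
    have : g '' ball (0:ℂ) (1/2) ∈ 𝓝 (0:ℂ) := by
      apply hop
      rw [mem_map]
      exact mem_of_superset (ball_mem_nhds 0 (by norm_num)) (subset_preimage_image g _)
    rcases Metric.mem_nhds_iff.1 this with ⟨r, hr, hsub⟩
    exact ⟨r, hr, by simpa using hsub⟩
  -- lower bound for |g| near ζ₀
  have hlow : ∀ z ∈ ball ζ₀ (4⁻¹ : ℝ) \ {ζ₀}, r₀ ≤ ‖g z‖ := by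
    rintro z ⟨hzb, hzζ⟩
    simp only [mem_singleton_iff] at hzζ
    by_contra hlt
    push_neg at hlt
    have : g z ∈ ball (0:ℂ) r₀ := by simpa [mem_ball_zero_iff] using hlt
    obtain ⟨z', hz', hgz'⟩ := hr₀ this
    have hz'abs : ‖z'‖ < 1/2 := by simpa [mem_ball_zero_iff] using hz'
    have hz'ζ : z' ≠ ζ₀ := by
      intro h; rw [h, hζ₀] at hz'abs; norm_num at hz'abs
    have heq : z' = z := hinj (by simpa using hz'ζ) (by simpa using hzζ) hgz'
    have hzabs : (3:ℝ)/4 ≤ ‖z‖ := by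
      have h1 : ‖z - ζ₀‖ < 4⁻¹ := mem_ball_iff_norm.1 hzb
      have h2 : ‖ζ₀‖ - ‖z‖ ≤ ‖z - ζ₀‖ := by
        have := norm_sub_norm_le ζ₀ z
        rwa [norm_sub_rev ζ₀ z] at this
      rw [hζ₀] at h2; linarith
    rw [heq] at hz'abs
    linarith
  -- removable singularity for 1/g at ζ₀
  set φ : ℂ → ℂ := fun z => (g z)⁻¹ with hφdef
  have hballnhds : ball ζ₀ (4⁻¹:ℝ) ∈ 𝓝 ζ₀ := ball_mem_nhds _ (by norm_num)
  have hφdiff : DifferentiableOn ℂ φ (ball ζ₀ (4⁻¹:ℝ) \ {ζ₀}) := by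
    apply DifferentiableOn.inv
    · exact hdiff.mono (fun z hz => by simpa using hz.2)
    · intro z hz
      have := hlow z hz
      intro h; rw [h] at this; simp at this; linarith
  have hφbdd : BddAbove (norm ∘ φ '' (ball ζ₀ (4⁻¹:ℝ) \ {ζ₀})) := by
    refine ⟨r₀⁻¹, ?_⟩
    rintro x ⟨z, hz, rfl⟩
    have := hlow z hz
    simp only [Function.comp_apply, hφdef, norm_inv]
    exact inv_anti₀ hr₀pos this
  set q : ℂ → ℂ := Function.update φ ζ₀ (limUnder (𝓝[≠] ζ₀) φ) with hqdef
  have hq : DifferentiableOn ℂ q (ball ζ₀ (4⁻¹:ℝ)) :=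
    Complex.differentiableOn_update_limUnder_of_bddAbove hballnhds hφdiff hφbdd
  have hqAt : DifferentiableAt ℂ q ζ₀ := hq.differentiableAt hballnhds
  have hqc : ContinuousAt q ζ₀ := hqAt.continuousAt
  set a : ℂ := q ζ₀ with hadef
  have hqeq : ∀ z : ℂ, z ≠ ζ₀ → q z = (g z)⁻¹ := by
    intro z hz; simp [hqdef, Function.update_of_ne hz, hφdef]
  -- 1 ≤ |a|
  have ha1 : 1 ≤ ‖a‖ := by
    have hT : Tendsto (fun t : ℝ => ((1 - t : ℝ) : ℂ) * ζ₀) (𝓝[>] (0:ℝ)) (𝓝 ζ₀) := by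
      have hcont : Continuous (fun t : ℝ => ((1 - t : ℝ) : ℂ) * ζ₀) := by continuity
      have := hcont.tendsto 0
      simp only [sub_zero, Complex.ofReal_one, one_mul] at this
      exact this.mono_left nhdsWithin_le_nhds
    have hTq : Tendsto (fun t : ℝ => ‖q (((1 - t : ℝ) : ℂ) * ζ₀)‖)
        (𝓝[>] (0:ℝ)) (𝓝 (‖a‖)) :=
      (continuous_norm.tendsto a).comp ((hqc.tendsto).comp hT)
    refine ge_of_tendsto hTq ?_
    filter_upwards [Ioo_mem_nhdsGT_of_mem (show (0:ℝ) ∈ Set.Ico (0:ℝ) (1/8) from ⟨le_refl _, by norm_num⟩)] with t ht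
    obtain ⟨ht0, ht8⟩ := ht
    set zt : ℂ := ((1 - t : ℝ) : ℂ) * ζ₀ with hzt
    have habs : ‖zt‖ = 1 - t := by
      rw [hzt, norm_mul, hζ₀, mul_one, Complex.norm_real, Real.norm_eq_abs, abs_of_pos (by linarith)]
    have hzt1 : ‖zt‖ < 1 := by rw [habs]; linarith
    have hztζ : zt ≠ ζ₀ := by
      intro h
      have : ‖zt‖ = 1 := by rw [h, hζ₀]
      rw [habs] at this; linarith
    have hzt0 : zt ≠ 0 := by
      intro h
      have : ‖zt‖ = 0 := by rw [h]; simp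
      rw [habs] at this; linarith
    have hgzt : g zt ≠ 0 := hgne zt hztζ hzt0
    have hgabs : 0 < ‖g zt‖ := by
      simpa [norm_pos_iff] using hgzt
    have hle : ‖g zt‖ ≤ 1 := le_of_lt (lt_of_le_of_lt (schwarz zt hzt1) hzt1)
    rw [hqeq zt hztζ, norm_inv]
    rw [le_inv_comm₀ one_pos hgabs]
    simpa using hle
  have hane : a ≠ 0 := by
    intro h; rw [h] at ha1; simp at ha1; linarith
  -- the entire extension G of g
  set G : ℂ → ℂ := fun z => if z = ζ₀ then a⁻¹ else g z with hGdef
  have hGg : ∀ z : ℂ, z ≠ ζ₀ → G z = g z := by intro z hz; simp [hGdef, hz]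
  have hGdiff : Differentiable ℂ G := by
    intro z
    by_cases hz : z = ζ₀
    · subst hz
      have hqev : ∀ᶠ w in 𝓝 z, q w ≠ 0 := hqc.eventually_ne hane
      have hbev : ∀ᶠ w in 𝓝 z, w ∈ ball z (4⁻¹:ℝ) := hballnhds
      have heq : (fun w => (q w)⁻¹) =ᶠ[𝓝 z] G := by
        filter_upwards [hqev] with w hw
        by_cases hwz : w = z
        · subst hwz; simp [hGdef, hadef]
        · have hqw : q w = (g w)⁻¹ := hqeq w hwz
          have hgw : g w ≠ 0 := by
            intro h; rw [hqw, h] at hw; simp at hw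
          rw [hGdef]; simp only [if_neg hwz]
          rw [hqw, inv_inv]
      have hdq : DifferentiableAt ℂ (fun w => (q w)⁻¹) z := hqAt.inv hane
      exact (Filter.EventuallyEq.differentiableAt_iff heq).1 hdq
    · have heq : g =ᶠ[𝓝 z] G := by
        filter_upwards [isOpen_compl_singleton.eventually_mem (by simpa using hz : z ∈ ({ζ₀}ᶜ : Set ℂ))] with w hw
        rw [hGg w (by simpa using hw)]
      have hgz : DifferentiableAt ℂ g z :=
        hdiff.differentiableAt (isOpen_compl_singleton.mem_nhds (by simpa using hz))
      exact (Filter.EventuallyEq.differentiableAt_iff heq).1 hgz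
  have hG0 : G 0 = 0 := by
    rw [hGg 0 (fun h => hζne0 h.symm), h0]
  have hGζ : G ζ₀ ≠ 0 := by
    simp only [hGdef, if_pos rfl]
    exact inv_ne_zero hane
  -- the quotient h = dslope G 0
  set h : ℂ → ℂ := dslope G 0 with hhdef
  have hh : Differentiable ℂ h := by
    rw [← differentiableOn_univ]
    rw [hhdef]
    exact (Complex.differentiableOn_dslope univ_mem).2 hGdiff.differentiableOn
  have hslope : ∀ z : ℂ, z ≠ 0 → h z = G z / z := by
    intro z hz
    rw [hhdef, dslope_of_ne _ hz, slope_def_field, hG0, sub_zero, sub_zero]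
  have hev0 : G =ᶠ[𝓝 (0:ℂ)] g := by
    filter_upwards [isOpen_compl_singleton.eventually_mem h0mem] with w hw
    exact hGg w (by simpa using hw)
  have hh0 : h 0 = deriv g 0 := by
    rw [hhdef, dslope_same, hev0.deriv_eq]
  have hhne : ∀ z : ℂ, h z ≠ 0 := by
    intro z
    by_cases hz : z = 0
    · rw [hz, hh0]; exact hd0
    · rw [hslope z hz]
      apply div_ne_zero _ hz
      by_cases hzζ : z = ζ₀
      · rw [hzζ]; exact hGζ
      · rw [hGg z hzζ]; exact hgne z hzζ hz
  have hinvd : Differentiable ℂ (fun z => (h z)⁻¹) := hh.inv hhne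
  -- bound outside the closed unit disk
  have hout : ∀ z : ℂ, 1 < ‖z‖ → z ≠ ζ₀ → ‖(h z)⁻¹‖ ≤ 1 := by
    intro z hz hzζ
    have hz0 : z ≠ 0 := by
      intro h'; rw [h'] at hz; simp at hz; linarith
    have h1 : 1 ≤ ‖h z‖ := by
      rw [hslope z hz0, hGg z hzζ, norm_div]
      rw [one_le_div (by positivity)]
      exact hext z hz hzζ
    rw [norm_inv]
    exact inv_le_one_of_one_le₀ h1
  -- bound everywhere by the maximum modulus principle
  have hbnd : ∀ z : ℂ, ‖(h z)⁻¹‖ ≤ 1 := by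
    intro z
    by_cases hz2 : ‖z‖ ≤ 2
    · have hcl : z ∈ closure (ball (0:ℂ) 2) := by
        rw [closure_ball (0:ℂ) two_ne_zero]
        simpa [mem_closedBall_zero_iff] using hz2
      have := Complex.norm_le_of_forall_mem_frontier_norm_le (f := fun z => (h z)⁻¹) (C := 1)
        (U := ball (0:ℂ) 2) isBounded_ball hinvd.diffContOnCl ?_ hcl
      · simpa using this
      · intro w hw
        rw [frontier_ball (0:ℂ) two_ne_zero, mem_sphere_zero_iff_norm] at hw
        have hwabs : ‖w‖ = 2 := hw
        have hwζ : w ≠ ζ₀ := by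
          intro h'; rw [h', hζ₀] at hwabs; norm_num at hwabs
        simpa using hout w (by rw [hwabs]; norm_num) hwζ
    · push_neg at hz2
      have hzζ : z ≠ ζ₀ := by
        intro h'; rw [h', hζ₀] at hz2; norm_num at hz2
      exact hout z (by linarith) hzζ
  -- Liouville: (h ·)⁻¹ is constant
  have hb : Bornology.IsBounded (Set.range fun z => (h z)⁻¹) := by
    rw [Metric.isBounded_iff_subset_closedBall 0]
    refine ⟨1, ?_⟩
    rintro x ⟨z, rfl⟩
    simpa [mem_closedBall_zero_iff] using hbnd z
  have hconst : ∀ z : ℂ, h z = h 0 := by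
    intro z
    have := hinvd.apply_eq_apply_of_bounded hb z 0
    have h2 := congrArg (fun x => x⁻¹) this
    simpa [inv_inv] using h2
  -- the constant is 1
  have hd1 : h 0 = 1 := by
    have hge : 1 ≤ ‖h 0‖ := by
      have := hbnd 0
      rw [norm_inv] at this
      have hpos : 0 < ‖h 0‖ := by
        simpa [norm_pos_iff] using hhne 0
      rw [inv_le_one_iff₀] at this
      rcases this with h' | h'
      · exfalso; linarith
      · exact h'
    have hle : ‖h 0‖ ≤ 1 := by
      have hz₁ : ‖ζ₀ / 2‖ = 1/2 := by
        rw [norm_div, hζ₀]; norm_num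
      have hz₁0 : (ζ₀ / 2 : ℂ) ≠ 0 := by
        intro h'
        rw [h'] at hz₁; simp at hz₁
      have hz₁ζ : (ζ₀ / 2 : ℂ) ≠ ζ₀ := by
        intro h'
        rw [h', hζ₀] at hz₁; norm_num at hz₁
      have := hconst (ζ₀ / 2)
      rw [hslope _ hz₁0, hGg _ hz₁ζ] at this
      rw [← this, norm_div, hz₁]
      rw [div_le_one (by norm_num)]
      calc ‖g (ζ₀/2)‖ ≤ ‖ζ₀/2‖ := schwarz _ (by rw [hz₁]; norm_num)
        _ = 1/2 := hz₁
    have habs1 : ‖h 0‖ = 1 := le_antisymm hle hge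
    have him : (h 0).im = 0 := by rw [hh0]; exact hderiv.2
    have hre : 0 < (h 0).re := by rw [hh0]; exact hderiv.1
    have : h 0 = ((h 0).re : ℂ) := Complex.ext rfl (by simp [him])
    rw [this] at habs1 ⊢
    rw [Complex.norm_real, Real.norm_eq_abs, abs_of_pos hre] at habs1
    rw [habs1]; norm_num
  -- conclusion
  intro z hz
  by_cases hz0 : z = 0
  · rw [hz0, h0]
  · have := hconst z
    rw [hslope z hz0, hGg z hz, hd1] at this
    field_simp at this
    exact this
end
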